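/- Let D \subseteq k[x_{i,j} : 1 \leq i \leq k, 1 \leq j \leq m_i] be the monomial ideal generated by \{x_{i,j} x_{i,\ell} : |j - \ell| \geq 2\} \cup \{x_{i,j} x_{r,s} : i < r, j < m_i, s > 1\}. If a monomial x^u is not in D and two variables x_{i,j}, x_{i,\ell} with j < \ell in the same block i have positive exponent in u, then \ell = j + 1; moreover u is supported on at most two variables from block i, at most the last variable x_{i',m_{i'}} for each block i' < i, and at most the first variable x_{i',1} for each block i' > i. -/

import Mathlib

open MvPolynomial

/-- The monomial ideal `D`, generated by `x_{i,j} x_{i,ℓ}` with `|j - ℓ| ≥ 2` and by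
`x_{i,j} x_{r,s}` with `i < r`, `j < mᵢ`, `s > 1` (all indices in range). -/
noncomputable def scrollDiagIdeal (F : Type*) [Field F] (k : ℕ) (m : ℕ → ℕ) :
    Ideal (MvPolynomial (ℕ × ℕ) F) :=
  Ideal.span
    ({g | ∃ i j ℓ : ℕ, 1 ≤ i ∧ i ≤ k ∧ 1 ≤ j ∧ j ≤ m i ∧ 1 ≤ ℓ ∧ ℓ ≤ m i ∧
        j + 2 ≤ ℓ ∧ g = X (i, j) * X (i, ℓ)} ∪
      {g | ∃ i j r s : ℕ, 1 ≤ i ∧ i < r ∧ r ≤ k ∧ 1 ≤ j ∧ j < m i ∧ 1 < s ∧ s ≤ m r ∧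
        g = X (i, j) * X (r, s)})

lemma mem_span_of_pair {F : Type*} [Field F] {S : Set (MvPolynomial (ℕ × ℕ) F)}
    {u : (ℕ × ℕ) →₀ ℕ} {p q : ℕ × ℕ} (hpq : p ≠ q) (hp : 0 < u p) (hq : 0 < u q)
    (hg : X p * X q ∈ S) :
    (MvPolynomial.monomial u (1 : F)) ∈ Ideal.span S := by
  have hXX : (X p * X q : MvPolynomial (ℕ × ℕ) F)
      = monomial (Finsupp.single p 1 + Finsupp.single q 1) 1 := by
    rw [X, X, monomial_mul, one_mul]
  have hle : Finsupp.single p 1 + Finsupp.single q 1 ≤ u := by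
    intro x
    rcases eq_or_ne x p with rfl | hxp
    · rw [Finsupp.add_apply, Finsupp.single_eq_same, Finsupp.single_eq_of_ne' (Ne.symm hpq)]
      omega
    · rcases eq_or_ne x q with rfl | hxq
      · rw [Finsupp.add_apply, Finsupp.single_eq_same, Finsupp.single_eq_of_ne' hpq]
        omega
      · rw [Finsupp.add_apply, Finsupp.single_eq_of_ne' (Ne.symm hxp),
          Finsupp.single_eq_of_ne' (Ne.symm hxq)]
        exact Nat.zero_le _
  have : (MvPolynomial.monomial u (1 : F))
      = monomial (u - (Finsupp.single p 1 + Finsupp.single q 1)) 1 * (X p * X q) := by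
    rw [hXX, monomial_mul, one_mul, tsub_add_cancel_of_le hle]
  rw [this]
  exact Ideal.mul_mem_left _ _ (Ideal.subset_span hg)

theorem stmt_13 (F : Type*) [Field F] (k : ℕ) (m : ℕ → ℕ)
    (u : (ℕ × ℕ) →₀ ℕ)
    (hu : ∀ p ∈ u.support, 1 ≤ p.1 ∧ p.1 ≤ k ∧ 1 ≤ p.2 ∧ p.2 ≤ m p.1)
    (hD : (MvPolynomial.monomial u (1 : F)) ∉ scrollDiagIdeal F k m)
    (i j ℓ : ℕ) (hjl : j < ℓ) (hj : 0 < u (i, j)) (hl : 0 < u (i, ℓ)) :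
    ℓ = j + 1 ∧
      (∀ r s : ℕ, r < i → 0 < u (r, s) → s = m r) ∧
      (∀ r s : ℕ, i < r → 0 < u (r, s) → s = 1) ∧
      (∀ s : ℕ, 0 < u (i, s) → s = j ∨ s = ℓ) := by
  have hrange : ∀ a b : ℕ, 0 < u (a, b) → 1 ≤ a ∧ a ≤ k ∧ 1 ≤ b ∧ b ≤ m a :=
    fun a b h => hu (a, b) (Finsupp.mem_support_iff.mpr h.ne')
  obtain ⟨hi1, hik, hj1, hjm⟩ := hrange i j hj
  obtain ⟨_, _, hl1, hlm⟩ := hrange i ℓ hl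
  -- type-1 generator exclusion
  have hT1 : ∀ a b : ℕ, a < b → 0 < u (i, a) → 0 < u (i, b) → b < a + 2 := by
    intro a b hab ha hb
    by_contra h
    push_neg at h
    obtain ⟨_, _, ha1, ham⟩ := hrange i a ha
    obtain ⟨_, _, hb1, hbm⟩ := hrange i b hb
    exact hD (mem_span_of_pair (by simp; omega) ha hb
      (Or.inl ⟨i, a, b, hi1, hik, ha1, ham, hb1, hbm, h, rfl⟩))
  have hℓ : ℓ = j + 1 := by have := hT1 j ℓ hjl hj hl; omega
  refine ⟨hℓ, ?_, ?_, ?_⟩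
  · intro r s hr hs
    obtain ⟨hr1, _, hs1, hsm⟩ := hrange r s hs
    by_contra hne
    have hsm' : s < m r := lt_of_le_of_ne hsm hne
    exact hD (mem_span_of_pair (by simp; omega) hs hl
      (Or.inr ⟨r, s, i, ℓ, hr1, hr, hik, hs1, hsm', by omega, hlm, rfl⟩))
  · intro r s hr hs
    obtain ⟨_, hrk, hs1, hsm⟩ := hrange r s hs
    by_contra hne
    have hs1' : 1 < s := lt_of_le_of_ne hs1 (Ne.symm hne)
    exact hD (mem_span_of_pair (by simp; omega) hj hs
      (Or.inr ⟨i, j, r, s, hi1, hr, hrk, hj1, by omega, hs1', hsm, rfl⟩))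
  · intro s hs
    by_contra hne
    push_neg at hne
    obtain ⟨hne1, hne2⟩ := hne
    rcases lt_or_gt_of_ne hne1 with h1 | h1
    · have := hT1 s ℓ (by omega) hs hl
      omega
    · have := hT1 j s (by omega) hj hs
      omega
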